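/- If G is a finite group, then ℕ × G has only countably many subsemigroups. -/

import Mathlib

/-- Positive power in a semigroup: `ppow x n = x^(n+1)`. -/
private def ppow {α : Type*} [Mul α] (x : α) : ℕ → α
  | 0 => x
  | n + 1 => ppow x n * x

private lemma ppow_mem {α : Type*} [Mul α] (S : Subsemigroup α) {x : α} (hx : x ∈ S) :
    ∀ n : ℕ, ppow x n ∈ S := by
  intro n
  induction n with
  | zero => exact hx
  | succ k ih => exact S.mul_mem ih hx

/-- A monotone sequence in a finite partial order stabilizes. -/
private lemma monotone_stabilizes {α : Type*} [PartialOrder α] [Finite α]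
    (u : ℕ → α) (hu : Monotone u) : ∃ K, ∀ k, K ≤ k → u k = u K := by
  have hwf : WellFounded ((· > ·) : α → α → Prop) := (Finite.to_wellFoundedGT).wf
  obtain ⟨n, hn⟩ := wellFoundedGT_iff_monotone_chain_condition.mp ⟨hwf⟩ ⟨u, hu⟩
  exact ⟨n, fun k hk => (hn k hk).symm⟩

/-- Eventually periodic sequences valued in a countable type form a countable set. -/
private lemma countable_eventually_periodic {β : Type*} [Countable β] :
    Countable {f : ℕ → β // ∃ c M0, 0 < c ∧ ∀ n, M0 ≤ n → f (n + c) = f n} := by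
  classical
  set T := {f : ℕ → β // ∃ c M0, 0 < c ∧ ∀ n, M0 ≤ n → f (n + c) = f n}
  let c : T → ℕ := fun f => Classical.choose f.2
  let MM : T → ℕ := fun f => Classical.choose (Classical.choose_spec f.2)
  have hspec : ∀ f : T, 0 < c f ∧ ∀ n, MM f ≤ n → f.1 (n + c f) = f.1 n :=
    fun f => Classical.choose_spec (Classical.choose_spec f.2)
  let enc : T → ℕ × ℕ × List β := fun f => (c f, MM f, (List.range (MM f + c f)).map f.1)
  have hinj : Function.Injective enc := by
    intro f g h
    have h1 : c f = c g := congrArg Prod.fst h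
    have h2 : MM f = MM g := congrArg (fun p => p.2.1) h
    have h3 : (List.range (MM f + c f)).map f.1 = (List.range (MM g + c g)).map g.1 :=
      congrArg (fun p => p.2.2) h
    rw [← h1, ← h2] at h3
    have hlt : ∀ i, i < MM f + c f → f.1 i = g.1 i := by
      intro i hi
      have h3' := congrArg (fun l : List β => l[i]?) h3
      simp only [List.getElem?_map, List.getElem?_range hi] at h3'
      simpa using h3'
    apply Subtype.ext
    funext n
    induction n using Nat.strong_induction_on with
    | _ n ih =>
      by_cases hn : n < MM f + c f
      · exact hlt n hn
      · push_neg at hn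
        have hc : 0 < c f := (hspec f).1
        have hsub : n - c f + c f = n := Nat.sub_add_cancel (le_trans (Nat.le_add_left _ _) hn)
        have hfn : f.1 n = f.1 (n - c f) := by
          conv_lhs => rw [← hsub]
          exact (hspec f).2 (n - c f) (by omega)
        have hgn : g.1 n = g.1 (n - c f) := by
          conv_lhs => rw [← hsub]
          rw [h1]
          exact (hspec g).2 (n - c g) (by omega)
        rw [hfn, hgn]
        exact ih (n - c f) (by omega)
  exact Countable.of_equiv _ (Equiv.ofInjective enc hinj).symm

/-- If `G` is a finite group, then `ℕ × G` has only countably many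
subsemigroups. -/
theorem countable_subsemigroups_of_N_times_finite_group
    (G : Type*) [Group G] [Finite G] :
    Countable (Subsemigroup (Multiplicative ℕ+ × G)) := by
  classical
  set β := Set G
  -- slice function: `f S n = {g | (n+1's ofAdd, g) ∈ S}` indexed so that `f S n` uses `p = n`.
  let f : Subsemigroup (Multiplicative ℕ+ × G) → ℕ → Set G := fun S n =>
    {g | ∃ p : ℕ+, (p : ℕ) = n ∧ (Multiplicative.ofAdd p, g) ∈ S}
  have hmem : ∀ (S : Subsemigroup (Multiplicative ℕ+ × G)) (x : Multiplicative ℕ+ × G),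
      x ∈ S ↔ x.2 ∈ f S ((Multiplicative.toAdd x.1 : ℕ+) : ℕ) := by
    intro S x
    constructor
    · intro hx
      exact ⟨Multiplicative.toAdd x.1, rfl, by simpa using hx⟩
    · rintro ⟨p, hp, hmem⟩
      have hpe : p = Multiplicative.toAdd x.1 := PNat.coe_injective hp
      subst hpe
      simpa using hmem
  have hfinj : Function.Injective f := by
    intro S T h
    ext x
    rw [hmem S x, hmem T x, h]
  -- eventual periodicity of the slices
  have hper : ∀ S : Subsemigroup (Multiplicative ℕ+ × G),
      ∃ cc M0, 0 < cc ∧ ∀ n, M0 ≤ n → f S (n + cc) = f S n := by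
    intro S
    by_cases hS : ∃ x, x ∈ S
    · obtain ⟨x, hx⟩ := hS
      -- an element of `S` with trivial `G`-component
      set e := Nat.card G with he
      have hepos : 0 < e := Nat.card_pos
      set y := ppow x (e - 1) with hy
      have hyS : y ∈ S := ppow_mem S hx _
      have hy2 : ∀ n : ℕ, (ppow x n).2 = x.2 ^ (n + 1) := by
        intro n
        induction n with
        | zero => simp [ppow]
        | succ k ih => rw [ppow, Prod.snd_mul, ih, ← pow_succ]
      have hysnd : y.2 = 1 := by
        rw [hy, hy2, Nat.sub_add_cancel hepos]
        exact pow_card_eq_one'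
      set cc : ℕ := ((Multiplicative.toAdd y.1 : ℕ+) : ℕ) with hcc
      have hccpos : 0 < cc := (Multiplicative.toAdd y.1).2
      -- step : f S n ⊆ f S (n + cc)
      have hstep : ∀ n, f S n ⊆ f S (n + cc) := by
        intro n g hg
        obtain ⟨p, hp, hpS⟩ := hg
        refine ⟨p + Multiplicative.toAdd y.1, by push_cast [hp]; ring, ?_⟩
        have := S.mul_mem hpS hyS
        have hxy : (Multiplicative.ofAdd p, g) * y
            = (Multiplicative.ofAdd (p + Multiplicative.toAdd y.1), g) := by
          ext
          · show Multiplicative.ofAdd p * y.1 = Multiplicative.ofAdd (p + Multiplicative.toAdd y.1)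
            rw [ofAdd_add]
            simp
          · show g * y.2 = g
            rw [hysnd, mul_one]
        rwa [hxy] at this
      -- stabilization on each residue class
      have hires : ∀ r, ∃ K, ∀ k, K ≤ k → f S (r + k * cc) = f S (r + K * cc) := by
        intro r
        apply monotone_stabilizes (fun k => f S (r + k * cc))
        apply monotone_nat_of_le_succ
        intro k
        have := hstep (r + k * cc)
        simpa [Nat.succ_mul, ← Nat.add_assoc] using this
      choose K hK using hires
      set Kb := (Finset.range cc).sup K with hKb
      refine ⟨cc, cc * (Kb + 1), hccpos, ?_⟩
      intro n hn
      set r := n % cc with hr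
      set k := n / cc with hk
      have hrc : r < cc := Nat.mod_lt _ hccpos
      have hKr : K r ≤ Kb := Finset.le_sup (Finset.mem_range.mpr hrc)
      have hkb : Kb + 1 ≤ k := by
        rw [hk, Nat.le_div_iff_mul_le hccpos]
        calc (Kb + 1) * cc = cc * (Kb + 1) := Nat.mul_comm _ _
          _ ≤ n := hn
      have hnrk : n = r + k * cc := by
        rw [hr, hk]
        exact (Nat.mod_add_div' n cc).symm
      have h1 : f S (n + cc) = f S (r + (k + 1) * cc) := by
        rw [hnrk]; ring_nf
      have h2 : f S (r + (k + 1) * cc) = f S (r + K r * cc) := hK r (k + 1) (by omega)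
      have h3 : f S (r + k * cc) = f S (r + K r * cc) := hK r k (by omega)
      rw [h1, h2, ← h3, ← hnrk]
    · refine ⟨1, 0, Nat.one_pos, fun n _ => ?_⟩
      push_neg at hS
      ext g
      simp only [Set.mem_setOf_eq, f]
      constructor
      · rintro ⟨p, _, hp⟩; exact absurd hp (hS _)
      · rintro ⟨p, _, hp⟩; exact absurd hp (hS _)
  have hc : Countable {h : ℕ → Set G // ∃ cc M0, 0 < cc ∧ ∀ n, M0 ≤ n → h (n + cc) = h n} :=
    countable_eventually_periodic
  refine Countable.of_equiv _ (Equiv.ofInjective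
    (fun S => (⟨f S, hper S⟩ :
      {h : ℕ → Set G // ∃ cc M0, 0 < cc ∧ ∀ n, M0 ≤ n → h (n + cc) = h n})) ?_).symm
  intro a b hab
  exact hfinj (congrArg Subtype.val hab)
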